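/- Let λ = (λ_m)_{m≥1} be a nonincreasing sequence of nonnegative reals with λ_2 > 0, let 1 ≤ a_d ≤ d for each d ≥ 1, and let ∇_d be either {k ∈ ℕ^d : k_1 ≤ … ≤ k_{a_d}} (symmetric case) or {k ∈ ℕ^d : k_1 < … < k_{a_d}} (antisymmetric case). Let Λ_d denote the maximum of ∏_{l=1}^d λ_{k_l} over k ∈ ∇_d. Suppose there exist constants C, p > 0 and q ≥ 0 such that for all d ∈ ℕ and all ε ∈ (0,1] the set {k ∈ ∇_d : ∏_{l=1}^d λ_{k_l} > ε²} is finite with at most C·ε^{−p}·d^q elements (polynomial tractability). Then: (i) Σ_{m=1}^∞ λ_m^τ < ∞ for every τ > p/2; (ii) for every τ > p/2 and every d ∈ ℕ with Λ_d > 0, one has Λ_d^{−τ} · Σ_{k∈∇_d} (∏_{l=1}^d λ_{k_l})^τ ≤ (1+C)·d^q + C^{2τ/p} · ζ(2τ/p) · (d^{2q/p} / Λ_d)^τ, where ζ is the Riemann zeta function. -/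

import Mathlib

open scoped ENNReal

noncomputable section

/-- Multi-indices in `ℕ^d` (entries `≥ 1`) that are nondecreasing along the first `a`
coordinates (the symmetric index set `∇_d`). -/
def symIdx (a d : ℕ) : Set (Fin d → ℕ) :=
  {k | (∀ i, 1 ≤ k i) ∧ ∀ i j : Fin d, i ≤ j → (j : ℕ) < a → k i ≤ k j}

/-- Multi-indices in `ℕ^d` (entries `≥ 1`) that are strictly increasing along the first
`a` coordinates (the antisymmetric index set `∇_d`). -/
def asymIdx (a d : ℕ) : Set (Fin d → ℕ) :=
  {k | (∀ i, 1 ≤ k i) ∧ ∀ i j : Fin d, i < j → (j : ℕ) < a → k i < k j}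

/-- The Riemann zeta function at a real argument, as `∑_{n=1}^∞ n^{-s}` in `[0,∞]`. -/
def zetaSum (s : ℝ) : ℝ≥0∞ := ∑' n : ℕ, ((n : ℝ≥0∞) + 1) ^ (-s)


lemma keyCount (C D p : ℝ) (hC : 0 < C) (hD : 0 < D) (hp : 0 < p)
    (n : ℕ) (hn : 1 ≤ n) (x : ℝ) (hx0 : 0 < x) (hx1 : x ≤ 1)
    (h : ∀ ε : ℝ, 0 < ε → ε ≤ 1 → ε ^ 2 < x → (n : ℝ) ≤ C * ε ^ (-p) * D) :
    x ≤ (C * D / n) ^ (2 / p) := by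
  by_contra hlt
  push_neg at hlt
  set B := (C * D / n) ^ (2 / p) with hB
  have hn0 : (0:ℝ) < n := by exact_mod_cast hn
  have hCDn : 0 < C * D / n := by positivity
  have hB0 : 0 < B := Real.rpow_pos_of_pos hCDn _
  set t := (B + x) / 2 with ht
  have ht0 : 0 < t := by positivity
  have htx : t < x := by rw [ht]; linarith
  have htB : B < t := by rw [ht]; linarith
  have ht1 : t ≤ 1 := by linarith
  set ε := t ^ (1/2 : ℝ) with hε
  have hε0 : 0 < ε := Real.rpow_pos_of_pos ht0 _
  have hε1 : ε ≤ 1 := Real.rpow_le_one ht0.le ht1 (by norm_num)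
  have hεsq : ε ^ 2 = t := by
    rw [hε, ← Real.rpow_natCast (t ^ (1/2 : ℝ)) 2, ← Real.rpow_mul ht0.le]
    norm_num
  have h1 : (n : ℝ) ≤ C * ε ^ (-p) * D := h ε hε0 hε1 (by rw [hεsq]; exact htx)
  have hεp : ε ^ (-p) = t ^ (-(p/2)) := by
    rw [hε, ← Real.rpow_mul ht0.le]; ring_nf
  -- from htB : B < t get C * D < t ^ (p/2) * n
  have hBp : C * D / n < t ^ (p / 2) := by
    have h2 := Real.rpow_lt_rpow hB0.le htB (show (0:ℝ) < p / 2 by positivity)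
    have he : (2/p) * (p/2) = 1 := by field_simp
    rwa [hB, ← Real.rpow_mul hCDn.le, he, Real.rpow_one] at h2
  have hCD : C * D < t ^ (p/2) * n := by
    rw [div_lt_iff₀ hn0] at hBp; linarith
  have huv : t ^ (p/2) * t ^ (-(p/2)) = 1 := by
    rw [← Real.rpow_add ht0]; simp
  have hu0 : 0 < t ^ (p/2) := Real.rpow_pos_of_pos ht0 _
  have hv0 : 0 < t ^ (-(p/2)) := Real.rpow_pos_of_pos ht0 _
  have h3 : C * ε ^ (-p) * D < n := by
    rw [hεp]
    calc C * t ^ (-(p/2)) * D = (C * D) * t ^ (-(p/2)) := by ring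
    _ < (t ^ (p/2) * n) * t ^ (-(p/2)) := by
        exact mul_lt_mul_of_pos_right hCD hv0
    _ = (n : ℝ) * (t ^ (p/2) * t ^ (-(p/2))) := by ring
    _ = n := by rw [huv, mul_one]
  linarith

lemma aux2 {ι : Type} [Countable ι] (N : Set ι) (x : ι → ℝ) (hx0 : ∀ k, 0 ≤ x k)
    (L C D p τ : ℝ) (hC : 0 < C) (hD : 0 < D) (hp : 0 < p) (hτ : p / 2 < τ)
    (hL : 0 < L) (hxle : ∀ k ∈ N, x k ≤ L)
    (htr : ∀ ε : ℝ, 0 < ε → ε ≤ 1 → {k | k ∈ N ∧ ε ^ 2 < x k}.Finite ∧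
       ({k | k ∈ N ∧ ε ^ 2 < x k}.ncard : ℝ) ≤ C * ε ^ (-p) * D) :
    ENNReal.ofReal L ^ (-τ) * ∑' k : N, ENNReal.ofReal (x k.1) ^ τ
      ≤ ENNReal.ofReal (C * D) +
        ENNReal.ofReal ((C * D) ^ (2 * τ / p)) * zetaSum (2 * τ / p) *
          (ENNReal.ofReal L) ^ (-τ) := by
  have hτ0 : 0 < τ := lt_of_le_of_lt (by positivity) hτ
  set s := 2 * τ / p with hs
  have hs0 : 0 < s := by positivity
  set g : ι → ℝ≥0∞ := fun k => ENNReal.ofReal (x k) ^ τ with hg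
  set A := {k | k ∈ N ∧ 1 < x k} with hA
  set B := {k | k ∈ N ∧ 0 < x k ∧ x k ≤ 1} with hB
  -- A facts
  obtain ⟨hAfin, hAcard⟩ := htr 1 one_pos le_rfl
  rw [one_pow] at hAfin hAcard
  rw [Real.one_rpow, mul_one] at hAcard
  -- split
  have hsplit : ∑' k : N, g k.1 ≤ (∑' k : A, g k.1) + (∑' k : B, g k.1) := by
    rw [tsum_subtype, tsum_subtype, tsum_subtype, ← ENNReal.tsum_add]
    apply ENNReal.tsum_le_tsum
    intro k
    by_cases hk : k ∈ N
    · rw [Set.indicator_of_mem hk]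
      rcases lt_or_ge 1 (x k) with h1 | h1
      · rw [Set.indicator_of_mem (show k ∈ A from ⟨hk, h1⟩)]
        exact le_self_add
      · rcases lt_or_ge 0 (x k) with h0 | h0
        · rw [Set.indicator_of_mem (show k ∈ B from ⟨hk, h0, h1⟩)]
          exact le_add_self
        · have hx : x k = 0 := le_antisymm h0 (hx0 k)
          have : g k = 0 := by
            rw [hg]; simp only [hx, ENNReal.ofReal_zero]
            exact ENNReal.zero_rpow_of_pos hτ0
          rw [this]; exact zero_le
    · rw [Set.indicator_of_notMem hk]; exact zero_le
  -- bound on A-sum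
  have hSA : (∑' k : A, g k.1) ≤ ENNReal.ofReal (C * D) * ENNReal.ofReal L ^ τ := by
    rw [tsum_subtype]
    rw [tsum_eq_sum (s := hAfin.toFinset)
      (fun k hk => Set.indicator_of_notMem (fun hc => hk (hAfin.mem_toFinset.2 hc)) _)]
    have hterm : ∀ k ∈ hAfin.toFinset, A.indicator (fun k => g k) k ≤ ENNReal.ofReal L ^ τ := by
      intro k hk
      rw [Set.Finite.mem_toFinset] at hk
      rw [Set.indicator_of_mem hk]
      exact ENNReal.rpow_le_rpow (ENNReal.ofReal_le_ofReal (hxle k hk.1)) hτ0.le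
    calc ∑ k ∈ hAfin.toFinset, A.indicator (fun k => g k) k
        ≤ hAfin.toFinset.card • (ENNReal.ofReal L ^ τ) := Finset.sum_le_card_nsmul _ _ _ hterm
      _ = (hAfin.toFinset.card : ℝ≥0∞) * ENNReal.ofReal L ^ τ := by rw [nsmul_eq_mul]
      _ ≤ ENNReal.ofReal (C * D) * ENNReal.ofReal L ^ τ := by
          gcongr
          rw [← ENNReal.ofReal_natCast]
          apply ENNReal.ofReal_le_ofReal
          rw [← Set.ncard_eq_toFinset_card _ hAfin]
          exact hAcard
  -- rank machinery on B
  obtain ⟨e, he⟩ := exists_injective_nat ι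
  set R : ι → Set ι := fun k => {k' | k' ∈ B ∧ (x k < x k' ∨ (x k' = x k ∧ e k' ≤ e k))}
    with hR
  have hRsub : ∀ k ∈ B, ∀ ε : ℝ, ε ^ 2 < x k → R k ⊆ {k' | k' ∈ N ∧ ε ^ 2 < x k'} := by
    intro k hk ε hε k' hk'
    refine ⟨hk'.1.1, ?_⟩
    rcases hk'.2 with h | h
    · linarith
    · linarith [h.1]
  have hRfin : ∀ k ∈ B, (R k).Finite := by
    intro k hk
    have hxk0 := hk.2.1
    have hxk1 := hk.2.2
    set ε := (x k / 2) ^ (1/2 : ℝ) with hε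
    have hε0 : 0 < ε := Real.rpow_pos_of_pos (by linarith) _
    have hε1 : ε ≤ 1 := Real.rpow_le_one (by linarith) (by linarith) (by norm_num)
    have hεsq : ε ^ 2 = x k / 2 := by
      rw [hε, ← Real.rpow_natCast ((x k / 2) ^ (1/2:ℝ)) 2, ← Real.rpow_mul (by linarith)]
      norm_num
    exact ((htr ε hε0 hε1).1).subset (hRsub k hk ε (by rw [hεsq]; linarith))
  have hRmem : ∀ k ∈ B, k ∈ R k := fun k hk => ⟨hk, Or.inr ⟨rfl, le_rfl⟩⟩
  set r : ι → ℕ := fun k => (R k).ncard with hrdef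
  have hr1 : ∀ k ∈ B, 1 ≤ r k := by
    intro k hk
    exact (Set.ncard_pos (hRfin k hk)).2 ⟨k, hRmem k hk⟩
  have hrcount : ∀ k ∈ B, ∀ ε : ℝ, 0 < ε → ε ≤ 1 → ε ^ 2 < x k →
      ((r k : ℝ)) ≤ C * ε ^ (-p) * D := by
    intro k hk ε hε0 hε1 hε
    obtain ⟨hfin, hcard⟩ := htr ε hε0 hε1
    calc ((r k : ℕ) : ℝ) ≤ ({k' | k' ∈ N ∧ ε ^ 2 < x k'}.ncard : ℝ) := by
          exact_mod_cast Nat.cast_le.mpr (Set.ncard_le_ncard (hRsub k hk ε hε) hfin)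
      _ ≤ C * ε ^ (-p) * D := hcard
  have hxbound : ∀ k ∈ B, x k ≤ (C * D / r k) ^ (2 / p) :=
    fun k hk => keyCount C D p hC hD hp (r k) (hr1 k hk) (x k) hk.2.1 hk.2.2
      (hrcount k hk)
  -- r is strictly monotone along the order, hence injective on B
  have hmono' : ∀ k₁ ∈ B, ∀ k₂ ∈ B,
      (x k₂ < x k₁ ∨ (x k₁ = x k₂ ∧ e k₁ < e k₂)) → r k₁ < r k₂ := by
    intro k₁ h₁ k₂ h₂ hlt
    apply Set.ncard_lt_ncard ?_ (hRfin k₂ h₂)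
    constructor
    · intro k' hk'
      refine ⟨hk'.1, ?_⟩
      rcases hk'.2 with hc | hc
      · rcases hlt with hl | hl
        · exact Or.inl (by linarith)
        · exact Or.inl (by rw [← hl.1]; exact hc)
      · rcases hlt with hl | hl
        · exact Or.inl (by linarith [hc.1])
        · exact Or.inr ⟨by rw [hc.1, hl.1], hc.2.trans hl.2.le⟩
    · intro hsub
      have hmem := hsub (hRmem k₂ h₂)
      rcases hmem.2 with hc | hc
      · rcases hlt with hl | hl
        · linarith
        · rw [hl.1] at hc; linarith
      · rcases hlt with hl | hl
        · linarith [hc.1]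
        · exact absurd hc.2 (by omega)
  have hrinj : Set.InjOn r B := by
    intro k₁ h₁ k₂ h₂ heq
    by_contra hne
    rcases lt_trichotomy (x k₁) (x k₂) with hx | hx | hx
    · exact absurd heq (Nat.ne_of_gt (hmono' k₂ h₂ k₁ h₁ (Or.inl hx)))
    · rcases Nat.lt_or_ge (e k₁) (e k₂) with he' | he'
      · exact absurd heq (Nat.ne_of_lt (hmono' k₁ h₁ k₂ h₂ (Or.inr ⟨hx, he'⟩)))
      · have : e k₂ < e k₁ := lt_of_le_of_ne he' (fun hc => hne (he hc).symm)
        exact absurd heq (Nat.ne_of_gt (hmono' k₂ h₂ k₁ h₁ (Or.inr ⟨hx.symm, this⟩)))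
    · exact absurd heq (Nat.ne_of_lt (hmono' k₁ h₁ k₂ h₂ (Or.inl hx)))
  -- per-term bound on B
  have hterm : ∀ k : B, g k.1 ≤ ENNReal.ofReal ((C * D) ^ s) * ((r k.1 : ℝ≥0∞)) ^ (-s) := by
    intro ⟨k, hk⟩
    have hrk : (0:ℝ) < r k := by exact_mod_cast hr1 k hk
    have h1 : x k ^ τ ≤ ((C * D / r k) ^ (2 / p)) ^ τ :=
      Real.rpow_le_rpow (hx0 k) (hxbound k hk) hτ0.le
    have h2 : ((C * D / r k) ^ (2 / p)) ^ τ = (C * D) ^ s * (r k : ℝ) ^ (-s) := by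
      rw [← Real.rpow_mul (by positivity)]
      have : 2 / p * τ = s := by rw [hs]; ring
      rw [this, Real.div_rpow (by positivity) hrk.le, Real.rpow_neg hrk.le, div_eq_mul_inv]
    have h3 : g k ≤ ENNReal.ofReal ((C * D) ^ s * (r k : ℝ) ^ (-s)) := by
      show ENNReal.ofReal (x k) ^ τ ≤ _
      rw [ENNReal.ofReal_rpow_of_nonneg (hx0 k) hτ0.le]
      exact ENNReal.ofReal_le_ofReal (by rw [← h2]; exact h1)
    refine h3.trans (le_of_eq ?_)
    rw [ENNReal.ofReal_mul (by positivity), ← ENNReal.ofReal_rpow_of_pos hrk,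
      ENNReal.ofReal_natCast]
  -- B-sum bound
  have hSB : (∑' k : B, g k.1) ≤ ENNReal.ofReal ((C * D) ^ s) * zetaSum s := by
    calc (∑' k : B, g k.1)
        ≤ ∑' k : B, ENNReal.ofReal ((C * D) ^ s) * ((r k.1 : ℝ≥0∞)) ^ (-s) :=
          ENNReal.tsum_le_tsum hterm
      _ = ENNReal.ofReal ((C * D) ^ s) * ∑' k : B, ((r k.1 : ℝ≥0∞)) ^ (-s) :=
          ENNReal.tsum_mul_left
      _ ≤ ENNReal.ofReal ((C * D) ^ s) * zetaSum s := by
          gcongr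
          have hinj : Function.Injective (fun k : B => r k.1 - 1) := by
            intro k₁ k₂ h12
            have h1 := hr1 k₁.1 k₁.2
            have h2 := hr1 k₂.1 k₂.2
            have : r k₁.1 = r k₂.1 := by simp only at h12; omega
            exact Subtype.ext (hrinj k₁.2 k₂.2 this)
          have := ENNReal.tsum_comp_le_tsum_of_injective hinj
            (fun n : ℕ => ((n : ℝ≥0∞) + 1) ^ (-s))
          rw [zetaSum]
          refine le_trans (le_of_eq ?_) this
          apply tsum_congr
          intro k
          have h1 := hr1 k.1 k.2
          have : ((r k.1 - 1 : ℕ) : ℝ≥0∞) + 1 = (r k.1 : ℝ≥0∞) := by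
            rw [← Nat.cast_one (R := ℝ≥0∞), ← Nat.cast_add]
            congr 1
            omega
          simp only [this]
  -- assemble
  have hLne0 : ENNReal.ofReal L ^ τ ≠ 0 := by
    apply ne_of_gt
    apply ENNReal.rpow_pos (ENNReal.ofReal_pos.2 hL) ENNReal.ofReal_ne_top
  have hLnetop : ENNReal.ofReal L ^ τ ≠ ⊤ :=
    ENNReal.rpow_ne_top_of_nonneg hτ0.le ENNReal.ofReal_ne_top
  have hcancel : ENNReal.ofReal L ^ (-τ) * ENNReal.ofReal L ^ τ = 1 := by
    rw [ENNReal.rpow_neg]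
    exact ENNReal.inv_mul_cancel hLne0 hLnetop
  calc ENNReal.ofReal L ^ (-τ) * ∑' k : N, g k.1
      ≤ ENNReal.ofReal L ^ (-τ) *
        (ENNReal.ofReal (C * D) * ENNReal.ofReal L ^ τ +
          ENNReal.ofReal ((C * D) ^ s) * zetaSum s) :=
        mul_le_mul' le_rfl (hsplit.trans (add_le_add hSA hSB))
    _ = ENNReal.ofReal (C * D) * (ENNReal.ofReal L ^ (-τ) * ENNReal.ofReal L ^ τ) +
        ENNReal.ofReal ((C * D) ^ s) * zetaSum s * ENNReal.ofReal L ^ (-τ) := by ring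
    _ = ENNReal.ofReal (C * D) +
        ENNReal.ofReal ((C * D) ^ s) * zetaSum s * ENNReal.ofReal L ^ (-τ) := by
        rw [hcancel, mul_one]

/-- General necessary conditions: polynomial tractability of the (anti-)symmetric
tensor product problem forces `λ ∈ ℓ_τ` for all `τ > p/2` and a quantitative bound on
the normalized sum of all eigenvalues. -/
theorem stmt_3
    (Λ : ℕ → ℝ) (hnn : ∀ m, 0 ≤ Λ m)
    (hmono : ∀ m n : ℕ, 1 ≤ m → m ≤ n → Λ n ≤ Λ m) (h2 : 0 < Λ 2)
    (a : ℕ → ℕ) (ha : ∀ d : ℕ, 1 ≤ d → 1 ≤ a d ∧ a d ≤ d)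
    (nabla : (d : ℕ) → Set (Fin d → ℕ))
    (hnabla : (∀ d, nabla d = symIdx (a d) d) ∨ (∀ d, nabla d = asymIdx (a d) d))
    (Λd : ℕ → ℝ)
    (hΛd : ∀ d : ℕ, 1 ≤ d →
      IsGreatest ((fun k : Fin d → ℕ => ∏ l, Λ (k l)) '' nabla d) (Λd d))
    (C p q : ℝ) (hC : 0 < C) (hp : 0 < p) (hq : 0 ≤ q)
    (htract : ∀ d : ℕ, 1 ≤ d → ∀ ε : ℝ, 0 < ε → ε ≤ 1 →
      {k : Fin d → ℕ | k ∈ nabla d ∧ ε ^ 2 < ∏ l, Λ (k l)}.Finite ∧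
      ({k : Fin d → ℕ | k ∈ nabla d ∧ ε ^ 2 < ∏ l, Λ (k l)}.ncard : ℝ) ≤
        C * ε ^ (-p) * (d : ℝ) ^ q) :
    (∀ τ : ℝ, p / 2 < τ → Summable (fun m : ℕ => Λ (m + 1) ^ τ)) ∧
    (∀ τ : ℝ, p / 2 < τ → ∀ d : ℕ, 1 ≤ d → 0 < Λd d →
      ENNReal.ofReal (Λd d) ^ (-τ) *
          (∑' k : nabla d, ENNReal.ofReal (∏ l, Λ (k.1 l)) ^ τ)
        ≤ ENNReal.ofReal ((1 + C) * (d : ℝ) ^ q) +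
          ENNReal.ofReal C ^ (2 * τ / p) * zetaSum (2 * τ / p) *
            ((d : ℝ≥0∞) ^ (2 * q / p) * (ENNReal.ofReal (Λd d))⁻¹) ^ τ) := by
  -- membership in nabla 1
  have hd1 : ∀ k : Fin 1 → ℕ, 1 ≤ k 0 → k ∈ nabla 1 := by
    intro k hk
    have hall : ∀ i, 1 ≤ k i := by
      intro i
      have : i = 0 := Subsingleton.elim i 0
      rwa [this]
    rcases hnabla with h | h <;> rw [h 1]
    · exact ⟨hall, fun i j hij hj =>
        le_of_eq (congrArg k (Subsingleton.elim i j))⟩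
    · exact ⟨hall, fun i j hij hj => absurd hij
        (by rw [Subsingleton.elim i j]; exact lt_irrefl j)⟩
  -- the one-dimensional counting bound
  have hcount1 : ∀ n : ℕ, 1 ≤ n → ∀ ε : ℝ, 0 < ε → ε ≤ 1 → ε ^ 2 < Λ n →
      (n : ℝ) ≤ C * ε ^ (-p) := by
    intro n hn ε hε0 hε1 hε
    obtain ⟨hfin, hcard⟩ := htract 1 le_rfl ε hε0 hε1
    have hinj : Function.Injective (fun m : ℕ => (fun _ : Fin 1 => m)) :=
      fun m m' h => congrFun h 0
    have hTsub : (fun m : ℕ => (fun _ : Fin 1 => m)) '' Set.Icc 1 n ⊆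
        {k : Fin 1 → ℕ | k ∈ nabla 1 ∧ ε ^ 2 < ∏ l, Λ (k l)} := by
      rintro _ ⟨m, hm, rfl⟩
      refine ⟨hd1 _ hm.1, ?_⟩
      rw [Fin.prod_univ_one]
      have := hmono m n hm.1 hm.2
      linarith
    have h1 : (n : ℝ) ≤ ({k : Fin 1 → ℕ | k ∈ nabla 1 ∧ ε ^ 2 < ∏ l, Λ (k l)}.ncard : ℝ) := by
      have hle := Set.ncard_le_ncard hTsub hfin
      rw [Set.ncard_image_of_injective _ hinj, ← Finset.coe_Icc,
        Set.ncard_coe_finset, Nat.card_Icc, Nat.add_sub_cancel] at hle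
      exact_mod_cast hle
    have h2' := hcard
    rw [Nat.cast_one, Real.one_rpow, mul_one] at h2'
    linarith
  -- tail bound on the eigenvalues
  have htail : ∀ n : ℕ, C < n → Λ n ≤ (C / n) ^ (2 / p) := by
    intro n hn
    have hn1 : 1 ≤ n := by
      by_contra h
      push_neg at h
      interval_cases n
      · simp at hn; linarith
    rcases le_or_gt (Λ n) 0 with h0 | h0
    · exact h0.trans (Real.rpow_nonneg (by positivity) _)
    rcases le_or_gt (Λ n) 1 with h1 | h1
    · have := keyCount C 1 p hC one_pos hp n hn1 (Λ n) h0 h1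
        (fun ε ha hb hc => by rw [mul_one]; exact hcount1 n hn1 ε ha hb hc)
      rwa [mul_one] at this
    · exfalso
      have := hcount1 n hn1 1 one_pos le_rfl (by rwa [one_pow])
      rw [Real.one_rpow, mul_one] at this
      linarith
  have part1 : ∀ τ : ℝ, p / 2 < τ → Summable (fun m : ℕ => Λ (m + 1) ^ τ) := by
    intro τ hτ
    have hτ0 : 0 < τ := lt_of_le_of_lt (by positivity) hτ
    have hs1 : 1 < 2 * τ / p := by
      rw [lt_div_iff₀ hp]; linarith
    obtain ⟨N, hN⟩ : ∃ N : ℕ, C < N :=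
      ⟨⌈C⌉₊ + 1, lt_of_le_of_lt (Nat.le_ceil C) (by exact_mod_cast Nat.lt_succ_self _)⟩
    refine (summable_nat_add_iff N).mp ?_
    have hb : ∀ m : ℕ, Λ (m + N + 1) ^ τ ≤
        C ^ (2 * τ / p) * ((m + N + 1 : ℕ) : ℝ) ^ (-(2 * τ / p)) := by
      intro m
      have hn0 : (0:ℝ) < ((m + N + 1 : ℕ) : ℝ) := by positivity
      have hCn : C < ((m + N + 1 : ℕ) : ℝ) := by
        have ha2 : ((N : ℕ) : ℝ) ≤ ((m + N + 1 : ℕ) : ℝ) := by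
          exact_mod_cast Nat.le_add_left N (m+1) |>.trans (by omega)
        linarith
      have hle := htail (m + N + 1) hCn
      calc Λ (m + N + 1) ^ τ ≤ ((C / ((m + N + 1 : ℕ) : ℝ)) ^ (2 / p)) ^ τ :=
            Real.rpow_le_rpow (hnn _) hle hτ0.le
        _ = C ^ (2 * τ / p) * ((m + N + 1 : ℕ) : ℝ) ^ (-(2 * τ / p)) := by
            rw [← Real.rpow_mul (by positivity),
              (show 2 / p * τ = 2 * τ / p by ring),
              Real.div_rpow hC.le hn0.le, Real.rpow_neg hn0.le, div_eq_mul_inv]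
    apply Summable.of_nonneg_of_le (fun m => Real.rpow_nonneg (hnn _) τ) hb
    apply Summable.mul_left
    have hsum : Summable fun n : ℕ => (n : ℝ) ^ (-(2 * τ / p)) :=
      Real.summable_nat_rpow.2 (by linarith)
    refine Summable.congr ((summable_nat_add_iff (N + 1)).mpr hsum) (fun m => ?_)
    have hmm : m + (N + 1) = m + N + 1 := by omega
    rw [hmm]
  refine ⟨part1, ?_⟩
  intro τ hτ d hd hL
  have hτ0 : 0 < τ := lt_of_le_of_lt (by positivity) hτ
  have hd0 : (0:ℝ) < ((d : ℕ) : ℝ) := by exact_mod_cast hd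
  have hD0 : (0:ℝ) < ((d : ℕ) : ℝ) ^ q := Real.rpow_pos_of_pos hd0 q
  have hx0 : ∀ k : Fin d → ℕ, 0 ≤ ∏ l, Λ (k l) :=
    fun k => Finset.prod_nonneg fun l _ => hnn _
  have hxle : ∀ k ∈ nabla d, (∏ l, Λ (k l)) ≤ Λd d :=
    fun k hk => (hΛd d hd).2 ⟨k, hk, rfl⟩
  have hkey := aux2 (nabla d) (fun k => ∏ l, Λ (k l)) hx0 (Λd d) C (((d : ℕ) : ℝ) ^ q)
    p τ hC hD0 hp hτ hL hxle (htract d hd)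
  refine le_trans hkey (add_le_add ?_ (le_of_eq ?_))
  · apply ENNReal.ofReal_le_ofReal
    nlinarith
  · have hofD : ENNReal.ofReal (((d : ℕ) : ℝ) ^ q) = ((d : ℕ) : ℝ≥0∞) ^ q := by
      rw [← ENNReal.ofReal_rpow_of_pos hd0, ENNReal.ofReal_natCast]
    have e1 : ENNReal.ofReal ((C * ((d : ℕ) : ℝ) ^ q) ^ (2 * τ / p)) =
        ENNReal.ofReal C ^ (2 * τ / p) * (((d : ℕ) : ℝ≥0∞) ^ q) ^ (2 * τ / p) := by
      rw [Real.mul_rpow hC.le hD0.le, ENNReal.ofReal_mul (by positivity),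
        ← ENNReal.ofReal_rpow_of_pos hC, ← ENNReal.ofReal_rpow_of_pos hD0, hofD]
    have e2 : (((d : ℕ) : ℝ≥0∞) ^ q) ^ (2 * τ / p) =
        (((d : ℕ) : ℝ≥0∞) ^ (2 * q / p)) ^ τ := by
      rw [← ENNReal.rpow_mul, ← ENNReal.rpow_mul]
      congr 1
      ring
    have e3 : ENNReal.ofReal (Λd d) ^ (-τ) = ((ENNReal.ofReal (Λd d))⁻¹) ^ τ := by
      rw [ENNReal.rpow_neg, ENNReal.inv_rpow]
    calc ENNReal.ofReal ((C * ((d : ℕ) : ℝ) ^ q) ^ (2 * τ / p)) * zetaSum (2 * τ / p) *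
          ENNReal.ofReal (Λd d) ^ (-τ)
        = ENNReal.ofReal C ^ (2 * τ / p) * zetaSum (2 * τ / p) *
            ((((d : ℕ) : ℝ≥0∞) ^ (2 * q / p)) ^ τ * ((ENNReal.ofReal (Λd d))⁻¹) ^ τ) := by
          rw [e1, e2, e3]; ring
      _ = ENNReal.ofReal C ^ (2 * τ / p) * zetaSum (2 * τ / p) *
            (((d : ℕ) : ℝ≥0∞) ^ (2 * q / p) * (ENNReal.ofReal (Λd d))⁻¹) ^ τ := by
          rw [← ENNReal.mul_rpow_of_nonneg _ _ hτ0.le]
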